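/- Suppose β > 1 and h > 0, and let m₀ ∈ (0,1) be the largest solution in (−1,1) of the Curie-Weiss equation m = tanh(β(m+h)). Then there exist ι₀ > 0 and M₁, M₂ ∈ [0,1] with 0 ≤ M₁ < m₀ and m₀ < M₂ ≤ 1 such that: (i) for every m with M₁ ≤ m ≤ m₀, setting m' := m − ι₀(m − m₀), one has βm + βh ≥ ½ log((1+m')/(1−m')); and (ii) for every m with m₀ ≤ m ≤ M₂, setting m' := m − ι₀(m − m₀), one has βm + βh ≤ ½ log((1+m')/(1−m')). -/

import Mathlib

/-- `m₀` is the largest solution in `(-1,1)` of the Curie-Weiss equation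
`m = tanh(β(m+h))`, and it lies in `(0,1)`. -/
def IsLargestCWRoot (β h m₀ : ℝ) : Prop :=
  m₀ ∈ Set.Ioo (0 : ℝ) 1 ∧ m₀ = Real.tanh (β * (m₀ + h)) ∧
    ∀ m ∈ Set.Ioo (-1 : ℝ) 1, m = Real.tanh (β * (m + h)) → m ≤ m₀


noncomputable def CWL (x : ℝ) : ℝ := (1 / 2) * Real.log ((1 + x) / (1 - x))

lemma tanh_formula (y : ℝ) :
    Real.tanh y = (Real.exp (2 * y) - 1) / (Real.exp (2 * y) + 1) := by
  have h1 : Real.exp y ≠ 0 := (Real.exp_pos y).ne'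
  have h2 : Real.exp (2 * y) + 1 ≠ 0 := by positivity
  have h3 : Real.exp y + Real.exp (-y) ≠ 0 := by positivity
  rw [Real.tanh_eq_sinh_div_cosh, Real.sinh_eq, Real.cosh_eq, two_mul, Real.exp_add,
    Real.exp_neg]
  field_simp

lemma tanh_mem (y : ℝ) : Real.tanh y ∈ Set.Ioo (-1 : ℝ) 1 := by
  rw [tanh_formula]
  have hu : (0:ℝ) < Real.exp (2 * y) := Real.exp_pos _
  have hd : (0:ℝ) < Real.exp (2 * y) + 1 := by linarith
  constructor
  · rw [lt_div_iff₀ hd]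
    nlinarith
  · rw [div_lt_one hd]
    linarith

lemma tanh_pos {y : ℝ} (hy : 0 < y) : 0 < Real.tanh y := by
  rw [tanh_formula]
  have hu : (1:ℝ) < Real.exp (2 * y) := by
    rw [← Real.exp_zero]; exact Real.exp_lt_exp.2 (by linarith)
  have hd : (0:ℝ) < Real.exp (2*y) + 1 := by linarith
  exact div_pos (by linarith) hd

lemma tanh_strictMono : StrictMono Real.tanh := by
  intro a b hab
  rw [tanh_formula, tanh_formula]
  have ha : (0:ℝ) < Real.exp (2 * a) := Real.exp_pos _
  have hb : (0:ℝ) < Real.exp (2 * b) := Real.exp_pos _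
  have hu : Real.exp (2 * a) < Real.exp (2 * b) := Real.exp_lt_exp.2 (by linarith)
  rw [div_lt_div_iff₀ (by linarith) (by linarith)]
  nlinarith

lemma CWL_tanh (y : ℝ) : CWL (Real.tanh y) = y := by
  have hu : (0:ℝ) < Real.exp (2 * y) := Real.exp_pos _
  have key : (1 + Real.tanh y) / (1 - Real.tanh y) = Real.exp (2 * y) := by
    rw [tanh_formula]
    rw [div_eq_iff]
    · field_simp
      ring
    · rw [sub_ne_zero]
      intro hc
      have : (Real.exp (2*y) - 1) / (Real.exp (2*y) + 1) < 1 := by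
        rw [div_lt_one (by linarith)]; linarith
      rw [← hc] at this
      exact lt_irrefl _ this
  rw [CWL, key, Real.log_exp]
  ring

lemma hasDerivAt_CWL {x : ℝ} (hx : x ∈ Set.Ioo (-1 : ℝ) 1) :
    HasDerivAt CWL (1 / (1 - x ^ 2)) x := by
  obtain ⟨hx1, hx2⟩ := hx
  have h1 : (0:ℝ) < 1 + x := by linarith
  have h2 : (0:ℝ) < 1 - x := by linarith
  have hd1 : HasDerivAt (fun y : ℝ => Real.log (1 + y)) (1 / (1 + x)) x := by
    have := ((hasDerivAt_id x).const_add 1).log h1.ne'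
    simpa using this
  have hd2 : HasDerivAt (fun y : ℝ => Real.log (1 - y)) (-1 / (1 - x)) x := by
    have := ((hasDerivAt_id x).const_sub 1).log h2.ne'
    simpa using this
  have hd : HasDerivAt (fun y : ℝ => (1/2 : ℝ) * (Real.log (1 + y) - Real.log (1 - y)))
      ((1/2 : ℝ) * (1 / (1 + x) - -1 / (1 - x))) x := (hd1.sub hd2).const_mul _
  have heq : (fun y : ℝ => (1/2 : ℝ) * (Real.log (1 + y) - Real.log (1 - y))) =ᶠ[nhds x] CWL := by
    filter_upwards [Ioo_mem_nhds hx1 hx2] with y hy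
    have h1y : (0:ℝ) < 1 + y := by linarith [hy.1]
    have h2y : (0:ℝ) < 1 - y := by linarith [hy.2]
    rw [CWL, Real.log_div h1y.ne' h2y.ne']
  have := hd.congr_of_eventuallyEq heq.symm
  refine this.congr_deriv ?_
  have hne : (1:ℝ) - x ^ 2 ≠ 0 := by nlinarith
  field_simp
  ring


set_option maxHeartbeats 2000000 in
/-- for `β > 1`, `h > 0` and `m₀` the largest solution of the
Curie-Weiss equation, there exist `ι₀ > 0` and `M₁, M₂ ∈ [0,1]` with
`0 ≤ M₁ < m₀` and `m₀ < M₂ ≤ 1` such that, with `m' := m - ι₀(m - m₀)`,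
`βm + βh ≥ ½ log((1+m')/(1-m'))` for all `M₁ ≤ m ≤ m₀`, and
`βm + βh ≤ ½ log((1+m')/(1-m'))` for all `m₀ ≤ m ≤ M₂`. -/
theorem curieWeiss_two_sided_bounds (β h m₀ : ℝ) (hβ : 1 < β) (hh : 0 < h)
    (hm₀ : IsLargestCWRoot β h m₀) :
    ∃ ι₀ > (0 : ℝ), ∃ M₁ M₂ : ℝ,
      0 ≤ M₁ ∧ M₁ < m₀ ∧ m₀ < M₂ ∧ M₂ ≤ 1 ∧
      (∀ m : ℝ, M₁ ≤ m → m ≤ m₀ →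
        β * m + β * h ≥
          (1 / 2) * Real.log ((1 + (m - ι₀ * (m - m₀))) / (1 - (m - ι₀ * (m - m₀))))) ∧
      (∀ m : ℝ, m₀ ≤ m → m ≤ M₂ →
        β * m + β * h ≤
          (1 / 2) * Real.log ((1 + (m - ι₀ * (m - m₀))) / (1 - (m - ι₀ * (m - m₀))))) := by
  obtain ⟨⟨hm0pos, hm0lt1⟩, heq, _hlargest⟩ := hm₀
  have hβ0 : (0:ℝ) < β := by linarith
  have hLm0 : CWL m₀ = β * (m₀ + h) := by
    conv_lhs => rw [heq]
    exact CWL_tanh _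
  have hapos : 0 < Real.tanh (β * h) := tanh_pos (by positivity)
  set a := Real.tanh (β * h) with ha_def
  have haltm0 : a < m₀ := by
    rw [heq]; exact tanh_strictMono (by nlinarith)
  have hLa : CWL a = β * h := CWL_tanh _
  have hcont : ContinuousOn CWL (Set.Icc a m₀) := fun x hx =>
    (hasDerivAt_CWL ⟨by linarith [hx.1], by linarith [hx.2]⟩).continuousAt.continuousWithinAt
  have hderiv : ∀ x ∈ Set.Ioo a m₀, HasDerivAt CWL (1/(1-x^2)) x := fun x hx =>
    hasDerivAt_CWL ⟨by linarith [hx.1], by linarith [hx.2]⟩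
  obtain ⟨ξ, hξ, hslope⟩ :=
    exists_hasDerivAt_eq_slope CWL (fun x => 1/(1-x^2)) haltm0 hcont hderiv
  have hξ1 : 0 < ξ := lt_trans hapos hξ.1
  have hξ2 : ξ < m₀ := hξ.2
  have hξm : ξ^2 < m₀^2 := by nlinarith
  have hξsq : (0:ℝ) < 1 - ξ^2 := by nlinarith
  have h3 : CWL m₀ - CWL a = β * m₀ := by rw [hLm0, hLa]; ring
  rw [h3, div_eq_div_iff hξsq.ne' (by linarith : (0:ℝ) < m₀ - a).ne'] at hslope
  -- hslope : 1 * (m₀ - a) = β * m₀ * (1 - ξ ^ 2)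
  have hc : β * (1 - m₀^2) < 1 := by
    by_contra hcon
    push_neg at hcon
    have h1 : m₀ ≤ β * m₀ * (1 - m₀^2) := by nlinarith
    have h2 : β * m₀ * (1 - m₀^2) ≤ β * m₀ * (1 - ξ^2) := by
      nlinarith [mul_nonneg (mul_pos hβ0 hm0pos).le (sub_pos.2 hξm).le]
    linarith
  have hcpos : 0 < β * (1 - m₀^2) := mul_pos hβ0 (by nlinarith)
  obtain ⟨c, hcdef⟩ : ∃ x : ℝ, x = β * (1 - m₀^2) := ⟨_, rfl⟩
  have hc0 : 0 < c := hcdef ▸ hcpos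
  have hc1 : c < 1 := hcdef ▸ hc
  obtain ⟨ι₀, hιdef⟩ : ∃ x : ℝ, x = (1 - c)/2 := ⟨_, rfl⟩
  have hι0 : 0 < ι₀ := by rw [hιdef]; linarith
  have h1ι : 0 < 1 - ι₀ := by rw [hιdef]; linarith
  have hcι : c + ι₀ = 1 - ι₀ := by rw [hιdef]; ring
  obtain ⟨η, hηdef⟩ :
      ∃ x : ℝ, x = min ((1-ι₀)*m₀) (min ((1-ι₀)*(1-m₀)) (ι₀/(2*β))) := ⟨_, rfl⟩
  have hηpos : 0 < η := by
    rw [hηdef]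
    exact lt_min (mul_pos h1ι hm0pos)
      (lt_min (mul_pos h1ι (by linarith)) (div_pos hι0 (by linarith)))
  have hη1 : η ≤ (1-ι₀)*m₀ := hηdef ▸ min_le_left _ _
  have hη2 : η ≤ (1-ι₀)*(1-m₀) := hηdef ▸ le_trans (min_le_right _ _) (min_le_left _ _)
  have hη3 : η ≤ ι₀/(2*β) := hηdef ▸ le_trans (min_le_right _ _) (min_le_right _ _)
  have hβη : 2 * β * η ≤ ι₀ := by
    rw [le_div_iff₀ (by linarith : (0:ℝ) < 2*β)] at hη3
    linarith
  obtain ⟨M₁, hM1def⟩ : ∃ x : ℝ, x = m₀ - η/(1-ι₀) := ⟨_, rfl⟩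
  obtain ⟨M₂, hM2def⟩ : ∃ x : ℝ, x = m₀ + η/(1-ι₀) := ⟨_, rfl⟩
  have hdpos : 0 < η/(1-ι₀) := div_pos hηpos h1ι
  have hιm0 : 0 < ι₀ * m₀ := mul_pos hι0 hm0pos
  have hι1m0 : 0 < ι₀ * (1-m₀) := mul_pos hι0 (by linarith)
  have hηm0 : η < m₀ := by nlinarith
  have hη1m0 : η < 1 - m₀ := by nlinarith
  have key : ∀ m ∈ Set.Icc M₁ M₂,
      m₀ - η ≤ m - ι₀ * (m - m₀) ∧ m - ι₀ * (m - m₀) ≤ m₀ + η := by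
    intro m hm
    obtain ⟨hm1, hm2⟩ := hm
    rw [hM1def] at hm1
    rw [hM2def] at hm2
    have e1 := mul_le_mul_of_nonneg_left hm1 h1ι.le
    have e2 := mul_le_mul_of_nonneg_left hm2 h1ι.le
    rw [mul_sub, mul_div_cancel₀ _ h1ι.ne'] at e1
    rw [mul_add, mul_div_cancel₀ _ h1ι.ne'] at e2
    constructor <;> nlinarith [e1, e2]
  have hbound : ∀ m ∈ Set.Icc M₁ M₂,
      (m - ι₀ * (m - m₀)) ∈ Set.Ioo (-1:ℝ) 1 ∧
      β * (1 - (m - ι₀ * (m - m₀))^2) ≤ 1 - ι₀ := by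
    intro m hm
    obtain ⟨k1, k2⟩ := key m hm
    have hp0 : 0 < m - ι₀ * (m - m₀) := by linarith
    have hp1 : m - ι₀ * (m - m₀) < 1 := by linarith
    refine ⟨⟨by linarith, hp1⟩, ?_⟩
    have hsq : (m₀ - η)^2 ≤ (m - ι₀ * (m - m₀))^2 := by nlinarith
    have e3 : β * (1 - (m₀ - η)^2) ≤ c + 2*β*η := by
      rw [hcdef]
      nlinarith [mul_pos (mul_pos hβ0 hηpos) (show (0:ℝ) < 2 - 2*m₀ + η by linarith)]
    have e4 : β * (1 - (m - ι₀ * (m - m₀))^2) ≤ β * (1 - (m₀ - η)^2) := by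
      nlinarith [mul_le_mul_of_nonneg_left hsq hβ0.le]
    linarith
  set F : ℝ → ℝ := fun m => β * m + β * h - CWL (m - ι₀ * (m - m₀)) with hFdef
  have hFderiv : ∀ m ∈ Set.Icc M₁ M₂,
      HasDerivAt F (β - 1/(1 - (m - ι₀ * (m - m₀))^2) * (1-ι₀)) m := by
    intro m hm
    have hp := (hbound m hm).1
    have hinner : HasDerivAt (fun m : ℝ => m - ι₀ * (m - m₀)) (1-ι₀) m := by
      have := (hasDerivAt_id m).sub (((hasDerivAt_id m).sub_const m₀).const_mul ι₀)
      exact this.congr_deriv (by ring)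
    have hcomp := (hasDerivAt_CWL hp).comp m hinner
    have hlin : HasDerivAt (fun m : ℝ => β * m + β * h) β m := by
      simpa using ((hasDerivAt_id m).const_mul β).add_const (β*h)
    have := hlin.sub hcomp
    exact this
  have hant : AntitoneOn F (Set.Icc M₁ M₂) := by
    apply antitoneOn_of_deriv_nonpos (convex_Icc _ _)
    · exact fun x hx => (hFderiv x hx).continuousAt.continuousWithinAt
    · rw [interior_Icc]
      exact fun x hx =>
        ((hFderiv x (Set.mem_Icc_of_Ioo hx)).differentiableAt).differentiableWithinAt
    · rw [interior_Icc]
      intro x hx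
      rw [(hFderiv x (Set.mem_Icc_of_Ioo hx)).deriv]
      have hb := (hbound x (Set.mem_Icc_of_Ioo hx)).2
      have hp := (hbound x (Set.mem_Icc_of_Ioo hx)).1
      have hps : (0:ℝ) < 1 - (x - ι₀ * (x - m₀))^2 := by
        nlinarith [mul_pos (show (0:ℝ) < 1 - (x - ι₀ * (x - m₀)) by linarith [hp.2])
          (show (0:ℝ) < 1 + (x - ι₀ * (x - m₀)) by linarith [hp.1])]
      rw [sub_nonpos, one_div, inv_mul_eq_div, le_div_iff₀ hps]
      linarith
  have hFm0 : F m₀ = 0 := by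
    rw [hFdef]
    simp only [sub_self, mul_zero, sub_zero]
    rw [hLm0]; ring
  have hm0mem : m₀ ∈ Set.Icc M₁ M₂ :=
    ⟨by rw [hM1def]; linarith, by rw [hM2def]; linarith⟩
  refine ⟨ι₀, hι0, M₁, M₂, ?_, ?_, ?_, ?_, ?_, ?_⟩
  · rw [hM1def]
    have : η/(1-ι₀) ≤ m₀ := by rw [div_le_iff₀ h1ι]; nlinarith
    linarith
  · rw [hM1def]; linarith
  · rw [hM2def]; linarith
  · rw [hM2def]
    have : η/(1-ι₀) ≤ 1 - m₀ := by rw [div_le_iff₀ h1ι]; nlinarith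
    linarith
  · intro m hml hmr
    have hmem : m ∈ Set.Icc M₁ M₂ := ⟨hml, le_trans hmr hm0mem.2⟩
    have hF := hant hmem hm0mem hmr
    rw [hFm0] at hF
    have hF' : F m = β * m + β * h - CWL (m - ι₀ * (m - m₀)) := rfl
    rw [hF'] at hF
    show β * m + β * h ≥ CWL (m - ι₀ * (m - m₀))
    linarith
  · intro m hml hmr
    have hmem : m ∈ Set.Icc M₁ M₂ := ⟨le_trans hm0mem.1 hml, hmr⟩
    have hF := hant hm0mem hmem hml
    rw [hFm0] at hF
    have hF' : F m = β * m + β * h - CWL (m - ι₀ * (m - m₀)) := rfl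
    rw [hF'] at hF
    show β * m + β * h ≤ CWL (m - ι₀ * (m - m₀))
    linarith
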